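/- Let A, B ∈ ℝ^{n×n} be block matrices A = [A_{ij}] with blocks A_{ij} ∈ ℝ^{n_i×n_j}, and suppose there is a matrix A_N = [a_{ij}] ∈ ℝ^{m×m} with a_{ii} ≥ μ_i(A_{ii}) and a_{ij} ≥ ‖A_{ij}‖_{ij} for i ≠ j. Then μ_G(A) ≤ μ_N(A_N), where μ_G is the matrix measure induced by the global norm |v|_G := |(|v_1|_1,…,|v_m|_m)|_N built from local norms |·|_i and a monotone network norm |·|_N, and μ_N is the matrix measure induced by |·|_N. -/

import Mathlib

open Filter Topology

/-- A function `N` is a norm on a real vector space. -/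
def IsNorm {E : Type*} [AddCommGroup E] [Module ℝ E] (N : E → ℝ) : Prop :=
  (∀ v, N v = 0 ↔ v = 0) ∧ (∀ (c : ℝ) (v : E), N (c • v) = |c| * N v) ∧
    (∀ v w, N (v + w) ≤ N v + N w)

/-- Operator norm of a (possibly rectangular) matrix induced by norms on domain and codomain. -/
noncomputable def opNorm {n m : ℕ} (Nin : (Fin m → ℝ) → ℝ) (Nout : (Fin n → ℝ) → ℝ)
    (A : Matrix (Fin n) (Fin m) ℝ) : ℝ :=
  sSup {c | ∃ v, Nin v = 1 ∧ c = Nout (A.mulVec v)}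

/-- `μ` is the matrix measure (logarithmic norm) induced by the norm `N` on `ℝ^n`. -/
def IsMatMeasure {n : ℕ} (N : (Fin n → ℝ) → ℝ) (μ : Matrix (Fin n) (Fin n) ℝ → ℝ) : Prop :=
  ∀ A : Matrix (Fin n) (Fin n) ℝ,
    Tendsto (fun t : ℝ => (opNorm N N (1 + t • A) - 1) / t) (𝓝[>] 0) (𝓝 (μ A))


/-- Operator "norm" of a map on a vector space relative to a norm `G`. -/
noncomputable def mapOpNorm {E : Type*} (G : E → ℝ) (T : E → E) : ℝ :=
  sSup {c | ∃ v, G v = 1 ∧ c = G (T v)}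

namespace IsNorm
variable {k : ℕ} {N : (Fin k → ℝ) → ℝ} (h : IsNorm N)

lemma zero (h : IsNorm N) : N 0 = 0 := (h.1 0).mpr rfl

lemma nonneg (h : IsNorm N) (v : Fin k → ℝ) : 0 ≤ N v := by
  have h1 : N (-v) = N v := by simpa using h.2.1 (-1) v
  have h2 := h.2.2 v (-v)
  rw [add_neg_cancel, h.zero, h1] at h2
  linarith

lemma sum_le (h : IsNorm N) {ι : Type*} (s : Finset ι) (f : ι → (Fin k → ℝ)) :
    N (∑ j ∈ s, f j) ≤ ∑ j ∈ s, N (f j) := by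
  classical
  induction s using Finset.induction with
  | empty => simp [h.zero]
  | @insert a s hx ih =>
    rw [Finset.sum_insert hx, Finset.sum_insert hx]
    exact le_trans (h.2.2 _ _) (by linarith)

lemma le_const_mul (h : IsNorm N) : ∃ C : ℝ, 0 ≤ C ∧ ∀ v, N v ≤ C * ‖v‖ := by
  refine ⟨∑ j, N (Pi.single j 1), Finset.sum_nonneg fun j _ => h.nonneg _, fun v => ?_⟩
  calc N v = N (∑ j, Pi.single j (v j)) := by rw [Finset.univ_sum_single]
    _ ≤ ∑ j, N (Pi.single j (v j)) := h.sum_le _ _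
    _ ≤ ∑ j, N (Pi.single j 1) * ‖v‖ := by
        refine Finset.sum_le_sum fun j _ => ?_
        have e1 : Pi.single j (v j) = v j • (Pi.single j 1 : Fin k → ℝ) := by
          ext x
          by_cases hx : x = j <;> simp [Pi.single_apply, hx]
        rw [e1, h.2.1, mul_comm]
        refine mul_le_mul_of_nonneg_left ?_ (h.nonneg _)
        calc |v j| = ‖v j‖ := rfl
          _ ≤ ‖v‖ := norm_le_pi_norm v j
    _ = (∑ j, N (Pi.single j 1)) * ‖v‖ := by rw [Finset.sum_mul]

lemma continuous (h : IsNorm N) : Continuous N := by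
  obtain ⟨C, hC0, hC⟩ := h.le_const_mul
  refine LipschitzWith.continuous (K := C.toNNReal) (LipschitzWith.of_dist_le_mul fun x y => ?_)
  rw [Real.dist_eq, dist_eq_norm, Real.coe_toNNReal C hC0]
  have h1 : N x - N y ≤ N (x - y) := by
    have := h.2.2 (x - y) y; simp at this; linarith
  have h2 : N y - N x ≤ N (x - y) := by
    have e : N (y - x) = N (x - y) := by
      have : y - x = (-1 : ℝ) • (x - y) := by ring_nf; module
      rw [this, h.2.1]; simp
    have := h.2.2 (y - x) x; simp at this; linarith
  have := hC (x - y)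
  rw [abs_sub_le_iff]
  constructor <;> linarith

lemma exists_pos_le (h : IsNorm N) : ∃ c : ℝ, 0 < c ∧ ∀ v, c * ‖v‖ ≤ N v := by
  rcases Nat.eq_zero_or_pos k with hk | hk
  · refine ⟨1, one_pos, fun v => ?_⟩
    subst hk
    have hv : v = 0 := Subsingleton.elim v 0
    rw [hv, one_mul, norm_zero, h.zero]
  · set j0 : Fin k := ⟨0, hk⟩
    have hx0 : ‖(Pi.single j0 1 : Fin k → ℝ)‖ = 1 := by
      refine le_antisymm ?_ ?_
      · refine pi_norm_le_iff_of_nonneg zero_le_one |>.mpr fun i => ?_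
        by_cases hi : i = j0 <;> simp [Pi.single_apply, hi]
      · have := norm_le_pi_norm (Pi.single j0 1 : Fin k → ℝ) j0
        simpa using this
    have hne : (Metric.sphere (0 : Fin k → ℝ) 1).Nonempty :=
      ⟨Pi.single j0 1, by rwa [mem_sphere_zero_iff_norm]⟩
    obtain ⟨x, hxs, hmin⟩ := (isCompact_sphere (0 : Fin k → ℝ) 1).exists_isMinOn hne
      h.continuous.continuousOn
    rw [mem_sphere_zero_iff_norm] at hxs
    have hxne : x ≠ 0 := by intro h0; rw [h0] at hxs; simp at hxs
    have hcpos : 0 < N x := lt_of_le_of_ne (h.nonneg x) fun h0 => hxne ((h.1 x).mp h0.symm)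
    refine ⟨N x, hcpos, fun v => ?_⟩
    by_cases hv : v = 0
    · simp [hv, h.zero]
    · have hvn : (0:ℝ) < ‖v‖ := norm_pos_iff.mpr hv
      have hmem : (‖v‖⁻¹ • v) ∈ Metric.sphere (0 : Fin k → ℝ) 1 := by
        rw [mem_sphere_zero_iff_norm, norm_smul, norm_inv, norm_norm]
        field_simp
      have := hmin hmem
      simp only [IsMinOn, IsMinFilter] at this
      have h2 : N x ≤ N (‖v‖⁻¹ • v) := this
      rw [h.2.1, abs_of_pos (inv_pos.mpr hvn)] at h2
      calc N x * ‖v‖ ≤ (‖v‖⁻¹ * N v) * ‖v‖ := by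
            exact mul_le_mul_of_nonneg_right h2 hvn.le
        _ = N v := by field_simp
end IsNorm

lemma exists_mulVec_bound {a b : ℕ} (A : Matrix (Fin b) (Fin a) ℝ) :
    ∃ K : ℝ, 0 ≤ K ∧ ∀ v, ‖A.mulVec v‖ ≤ K * ‖v‖ := by
  let T : (Fin a → ℝ) →L[ℝ] (Fin b → ℝ) := LinearMap.toContinuousLinearMap A.mulVecLin
  refine ⟨‖T‖, norm_nonneg _, fun v => ?_⟩
  have : A.mulVec v = T v := (Matrix.mulVecLin_apply A v).symm
  rw [this]
  exact T.le_opNorm v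

lemma bddAbove_opNorm_set {a b : ℕ} {Nin : (Fin a → ℝ) → ℝ} {Nout : (Fin b → ℝ) → ℝ}
    (hin : IsNorm Nin) (hout : IsNorm Nout) (A : Matrix (Fin b) (Fin a) ℝ) :
    BddAbove {c | ∃ v, Nin v = 1 ∧ c = Nout (A.mulVec v)} := by
  obtain ⟨c, hc, hlow⟩ := hin.exists_pos_le
  obtain ⟨C, hC0, hCle⟩ := hout.le_const_mul
  obtain ⟨K, hK0, hK⟩ := exists_mulVec_bound A
  refine ⟨C * K * c⁻¹, ?_⟩
  rintro x ⟨v, hv1, rfl⟩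
  have hv : ‖v‖ ≤ c⁻¹ := by
    have h1 := hlow v
    rw [hv1] at h1
    have h2 : c * ‖v‖ ≤ c * c⁻¹ := by rw [mul_inv_cancel₀ hc.ne']; linarith
    exact le_of_mul_le_mul_left h2 hc
  calc Nout (A.mulVec v) ≤ C * ‖A.mulVec v‖ := hCle _
    _ ≤ C * (K * ‖v‖) := by nlinarith [hK v, norm_nonneg (A.mulVec v)]
    _ = C * K * ‖v‖ := by ring
    _ ≤ C * K * c⁻¹ := mul_le_mul_of_nonneg_left hv (mul_nonneg hC0 hK0)

lemma opNorm_bound {a b : ℕ} {Nin : (Fin a → ℝ) → ℝ} {Nout : (Fin b → ℝ) → ℝ}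
    (hin : IsNorm Nin) (hout : IsNorm Nout) (A : Matrix (Fin b) (Fin a) ℝ) (v : Fin a → ℝ) :
    Nout (A.mulVec v) ≤ opNorm Nin Nout A * Nin v := by
  by_cases hv : v = 0
  · rw [hv, Matrix.mulVec_zero, hout.zero, hin.zero, mul_zero]
  · have hNv : 0 < Nin v :=
      lt_of_le_of_ne (hin.nonneg v) fun h0 => hv ((hin.1 v).mp h0.symm)
    have hmem : Nout (A.mulVec ((Nin v)⁻¹ • v)) ∈
        {c | ∃ u, Nin u = 1 ∧ c = Nout (A.mulVec u)} := by
      refine ⟨(Nin v)⁻¹ • v, ?_, rfl⟩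
      rw [hin.2.1, abs_of_pos (inv_pos.mpr hNv)]
      field_simp
    have hle := le_csSup (bddAbove_opNorm_set hin hout A) hmem
    rw [Matrix.mulVec_smul, hout.2.1, abs_of_pos (inv_pos.mpr hNv)] at hle
    rw [opNorm]
    calc Nout (A.mulVec v) = Nin v * ((Nin v)⁻¹ * Nout (A.mulVec v)) := by field_simp
      _ ≤ Nin v * sSup {c | ∃ u, Nin u = 1 ∧ c = Nout (A.mulVec u)} :=
          mul_le_mul_of_nonneg_left hle hNv.le
      _ = _ := mul_comm _ _

lemma no_measure_of_zero {N : (Fin 0 → ℝ) → ℝ} {μ : Matrix (Fin 0) (Fin 0) ℝ → ℝ}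
    (hN : IsNorm N) (h : IsMatMeasure N μ) : False := by
  have hset : ∀ B : Matrix (Fin 0) (Fin 0) ℝ, opNorm N N B = 0 := by
    intro B
    have he : {c | ∃ v, N v = 1 ∧ c = N (B.mulVec v)} = ∅ := by
      ext c
      simp only [Set.mem_setOf_eq, Set.mem_empty_iff_false, iff_false, not_exists]
      rintro v ⟨hv, -⟩
      have hv0 : v = 0 := Subsingleton.elim v 0
      rw [hv0, hN.zero] at hv
      exact one_ne_zero hv.symm
    rw [opNorm, he, Real.sSup_empty]
  have h1 := h 0
  have h2 : Tendsto (fun t : ℝ => (opNorm N N (1 + t • (0 : Matrix (Fin 0) (Fin 0) ℝ)) - 1) / t)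
      (𝓝[>] (0:ℝ)) atBot := by
    have h3 : Tendsto (fun t : ℝ => -t⁻¹) (𝓝[>] (0:ℝ)) atBot :=
      tendsto_neg_atTop_atBot.comp tendsto_inv_nhdsGT_zero
    refine h3.congr fun t => ?_
    rw [hset]
    ring
  exact not_tendsto_nhds_of_tendsto_atBot h2 _ h1



/-- The matrix measure of a block matrix w.r.t. the global norm is bounded by the
matrix measure of the interconnection matrix w.r.t. the network norm. -/
theorem global_measure_le_network_measure {m : ℕ} (n : Fin m → ℕ)
    (Nl : ∀ i, (Fin (n i) → ℝ) → ℝ) (hNl : ∀ i, IsNorm (Nl i))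
    (NN : (Fin m → ℝ) → ℝ) (hNN : IsNorm NN)
    (hmono : ∀ v w : Fin m → ℝ, 0 ≤ w → w ≤ v → NN w ≤ NN v)
    (μl : ∀ i, Matrix (Fin (n i)) (Fin (n i)) ℝ → ℝ)
    (hμl : ∀ i, IsMatMeasure (Nl i) (μl i))
    (μN : Matrix (Fin m) (Fin m) ℝ → ℝ) (hμN : IsMatMeasure NN μN)
    (Ab : ∀ i j : Fin m, Matrix (Fin (n i)) (Fin (n j)) ℝ)
    (AN : Matrix (Fin m) (Fin m) ℝ)
    (hdiag : ∀ i, μl i (Ab i i) ≤ AN i i)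
    (hoff : ∀ i j, i ≠ j → opNorm (Nl j) (Nl i) (Ab i j) ≤ AN i j)
    (μG : ℝ)
    (hμG : Tendsto (fun t : ℝ =>
        (mapOpNorm (fun v : (∀ i, Fin (n i) → ℝ) => NN (fun i => Nl i (v i)))
          (fun v => v + t • fun i => ∑ j, (Ab i j).mulVec (v j)) - 1) / t)
      (𝓝[>] 0) (𝓝 μG)) :
    μG ≤ μN AN := by
  rcases Nat.eq_zero_or_pos m with hm | hm
  · subst hm
    exact (no_measure_of_zero hNN hμN).elim
  refine le_of_forall_pos_le_add fun ε hε => ?_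
  have hev : ∀ᶠ t in 𝓝[>] (0:ℝ),
      (mapOpNorm (fun v : (∀ i, Fin (n i) → ℝ) => NN (fun i => Nl i (v i)))
          (fun v => v + t • fun i => ∑ j, (Ab i j).mulVec (v j)) - 1) / t
        ≤ (opNorm NN NN (1 + t • AN) - 1) / t + ε := by
    have hall : ∀ᶠ t in 𝓝[>] (0:ℝ), ∀ i,
        (opNorm (Nl i) (Nl i) (1 + t • Ab i i) - 1) / t < AN i i + ε :=
      eventually_all.mpr fun i =>
        (hμl i (Ab i i)).eventually_lt_const (lt_of_le_of_lt (hdiag i) (by linarith))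
    filter_upwards [hall, self_mem_nhdsWithin] with t hallt ht
    replace ht : (0:ℝ) < t := ht
    have hT_bdd : BddAbove {c | ∃ u, NN u = 1 ∧ c = NN ((1 + t • AN).mulVec u)} :=
      bddAbove_opNorm_set hNN hNN _
    have hopdef : opNorm NN NN (1 + t • AN)
        = sSup {c | ∃ u, NN u = 1 ∧ c = NN ((1 + t • AN).mulVec u)} := rfl
    have hTnn : 0 ≤ opNorm NN NN (1 + t • AN) := by
      set j0 : Fin m := ⟨0, hm⟩
      set e : Fin m → ℝ := Pi.single j0 1 with he
      have hepos : 0 < NN e := by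
        refine lt_of_le_of_ne (hNN.nonneg e) fun h0 => ?_
        have h1 : e = 0 := (hNN.1 e).mp h0.symm
        have h2 := congrFun h1 j0
        simp [he] at h2
      have hu0 : NN ((NN e)⁻¹ • e) = 1 := by
        rw [hNN.2.1, abs_of_pos (inv_pos.mpr hepos)]
        field_simp
      rw [hopdef]
      exact le_trans (hNN.nonneg _) (le_csSup hT_bdd ⟨(NN e)⁻¹ • e, hu0, rfl⟩)
    have key : mapOpNorm (fun v : (∀ i, Fin (n i) → ℝ) => NN (fun i => Nl i (v i)))
        (fun v => v + t • fun i => ∑ j, (Ab i j).mulVec (v j))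
        ≤ opNorm NN NN (1 + t • AN) + t * ε := by
      rw [mapOpNorm]
      refine Real.sSup_le ?_ (by positivity)
      rintro c ⟨v, hv1, rfl⟩
      set u : Fin m → ℝ := fun i => Nl i (v i) with hu_def
      have hu : NN u = 1 := hv1
      have hupos : ∀ i, 0 ≤ u i := fun i => (hNl i).nonneg _
      have hw : ∀ i, Nl i (v i + t • ∑ j, (Ab i j).mulVec (v j))
          ≤ ((1 + t • AN).mulVec u) i + (t * ε) * u i := by
        intro i
        have hsplit : (∑ j, (Ab i j).mulVec (v j))
            = (Ab i i).mulVec (v i) + ∑ j ∈ Finset.univ.erase i, (Ab i j).mulVec (v j) :=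
          (Finset.add_sum_erase _ _ (Finset.mem_univ i)).symm
        have e1 : v i + t • ∑ j, (Ab i j).mulVec (v j)
            = (1 + t • Ab i i).mulVec (v i)
              + t • ∑ j ∈ Finset.univ.erase i, (Ab i j).mulVec (v j) := by
          rw [hsplit, smul_add, Matrix.add_mulVec, Matrix.one_mulVec,
            Matrix.smul_mulVec, add_assoc]
        rw [e1]
        have t1 : Nl i ((1 + t • Ab i i).mulVec (v i)) ≤ (1 + t * (AN i i + ε)) * u i := by
          refine le_trans (opNorm_bound (hNl i) (hNl i) _ _) ?_
          have hop : opNorm (Nl i) (Nl i) (1 + t • Ab i i) ≤ 1 + t * (AN i i + ε) := by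
            have h3 := hallt i
            rw [div_lt_iff₀ ht] at h3
            linarith
          exact mul_le_mul_of_nonneg_right hop (hupos i)
        have t2 : Nl i (t • ∑ j ∈ Finset.univ.erase i, (Ab i j).mulVec (v j))
            ≤ t * ∑ j ∈ Finset.univ.erase i, AN i j * u j := by
          rw [(hNl i).2.1, abs_of_pos ht]
          refine mul_le_mul_of_nonneg_left ?_ ht.le
          refine le_trans ((hNl i).sum_le _ _) (Finset.sum_le_sum fun j hj => ?_)
          have hij : i ≠ j := (Finset.ne_of_mem_erase hj).symm
          exact le_trans (opNorm_bound (hNl j) (hNl i) _ _)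
            (mul_le_mul_of_nonneg_right (hoff i j hij) (hupos j))
        have e2 : ((1 + t • AN).mulVec u) i
            = u i + t * (AN i i * u i + ∑ j ∈ Finset.univ.erase i, AN i j * u j) := by
          rw [Matrix.add_mulVec, Matrix.one_mulVec, Matrix.smul_mulVec]
          simp only [Pi.add_apply, Pi.smul_apply, smul_eq_mul]
          congr 1
          congr 1
          show Matrix.mulVec AN u i = _
          rw [Matrix.mulVec, dotProduct]
          exact (Finset.add_sum_erase _ _ (Finset.mem_univ i)).symm
        calc Nl i ((1 + t • Ab i i).mulVec (v i)
              + t • ∑ j ∈ Finset.univ.erase i, (Ab i j).mulVec (v j))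
            ≤ Nl i ((1 + t • Ab i i).mulVec (v i))
              + Nl i (t • ∑ j ∈ Finset.univ.erase i, (Ab i j).mulVec (v j)) := (hNl i).2.2 _ _
          _ ≤ (1 + t * (AN i i + ε)) * u i + t * ∑ j ∈ Finset.univ.erase i, AN i j * u j :=
              add_le_add t1 t2
          _ = (u i + t * (AN i i * u i + ∑ j ∈ Finset.univ.erase i, AN i j * u j))
              + (t * ε) * u i := by ring
          _ = ((1 + t • AN).mulVec u) i + (t * ε) * u i := by rw [e2]
      calc NN (fun i => Nl i ((v + t • fun i => ∑ j, (Ab i j).mulVec (v j)) i))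
          ≤ NN ((1 + t • AN).mulVec u + (t * ε) • u) := by
            refine hmono _ _ (fun i => (hNl i).nonneg _) fun i => ?_
            simpa [Pi.add_apply, Pi.smul_apply, smul_eq_mul] using hw i
        _ ≤ NN ((1 + t • AN).mulVec u) + NN ((t * ε) • u) := hNN.2.2 _ _
        _ = NN ((1 + t • AN).mulVec u) + t * ε := by
            rw [hNN.2.1, hu, mul_one, abs_of_nonneg (by positivity)]
        _ ≤ opNorm NN NN (1 + t • AN) + t * ε := by
            rw [hopdef]
            exact add_le_add_left (le_csSup hT_bdd ⟨u, hu, rfl⟩) _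
    have h4 : (mapOpNorm (fun v : (∀ i, Fin (n i) → ℝ) => NN (fun i => Nl i (v i)))
          (fun v => v + t • fun i => ∑ j, (Ab i j).mulVec (v j)) - 1) / t
        ≤ (opNorm NN NN (1 + t • AN) + t * ε - 1) / t :=
      (div_le_div_iff_of_pos_right ht).mpr (by linarith)
    have h5 : (opNorm NN NN (1 + t • AN) + t * ε - 1) / t
        = (opNorm NN NN (1 + t • AN) - 1) / t + ε := by
      field_simp
      ring
    linarith [h4, h5.symm.le, h5.le]
  have hμNε : Tendsto (fun t : ℝ => (opNorm NN NN (1 + t • AN) - 1) / t + ε)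
      (𝓝[>] (0:ℝ)) (𝓝 (μN AN + ε)) := (hμN AN).add_const ε
  exact le_of_tendsto_of_tendsto hμG hμNε hev
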